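/- For the closed interval [0, L] and any odd integer q = 2m+1 ≥ 3, the q-extent is xt_q([0,L]) = L · m(m+1) / C(2m+1,2) = L·(m+1)/(2m+1), realized by placing m points at one endpoint and m+1 at the other. -/

import Mathlib

open Metric

/-- Average pairwise distance of a `q`-tuple. -/
noncomputable def avgDist {X : Type*} [MetricSpace X] {q : ℕ} (x : Fin q → X) : ℝ :=
  (∑ i : Fin q, ∑ j : Fin q, if i < j then dist (x i) (x j) else 0) / (q.choose 2)

/-- The `q`-extent of a metric space: supremum of average pairwise distances. -/
noncomputable def extent (X : Type*) [MetricSpace X] (q : ℕ) : ℝ :=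
  sSup (Set.range (fun x : Fin q → X => avgDist x))

namespace ExtentAux

noncomputable def S {q : ℕ} (x : Fin q → ℝ) : ℝ :=
  ∑ i : Fin q, ∑ j : Fin q, if i < j then |x i - x j| else 0

noncomputable def T {q : ℕ} (x : Fin q → ℝ) : ℝ :=
  ∑ i : Fin q, ∑ j : Fin q, |x i - x j|

lemma T_eq {q : ℕ} (x : Fin q → ℝ) : T x = 2 * S x := by
  have h : ∀ i j : Fin q, |x i - x j| =
      (if i < j then |x i - x j| else 0) + (if j < i then |x j - x i| else 0) := by
    intro i j
    rcases lt_trichotomy i j with h | h | h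
    · simp [h, not_lt.2 h.le]
    · simp [h]
    · simp [h, not_lt.2 h.le, abs_sub_comm]
  have : T x = S x + ∑ i : Fin q, ∑ j : Fin q, (if j < i then |x j - x i| else 0) := by
    unfold T S
    rw [← Finset.sum_add_distrib]
    refine Finset.sum_congr rfl fun i _ => ?_
    rw [← Finset.sum_add_distrib]
    exact Finset.sum_congr rfl fun j _ => h i j
  rw [this, Finset.sum_comm]
  unfold S; ring

lemma T_update_le {q : ℕ} (x : Fin q → ℝ) (i : Fin q) {L t : ℝ} (hL : 0 < L)
    (ht : t ∈ Set.Icc 0 L) :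
    T (Function.update x i t) ≤ max (T (Function.update x i 0)) (T (Function.update x i L)) := by
  set lam := t / L with hlamdef
  have hlam0 : 0 ≤ lam := div_nonneg ht.1 hL.le
  have hlam1 : lam ≤ 1 := (div_le_one hL).2 ht.2
  have hcoord : ∀ c, Function.update x i t c
      = (1 - lam) * Function.update x i 0 c + lam * Function.update x i L c := by
    intro c
    by_cases hc : c = i
    · subst hc; simp only [Function.update_self, hlamdef]; field_simp; ring
    · simp only [Function.update_of_ne hc]; ring
  have key : T (Function.update x i t)
      ≤ (1 - lam) * T (Function.update x i 0) + lam * T (Function.update x i L) := by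
    unfold T
    rw [Finset.mul_sum, Finset.mul_sum, ← Finset.sum_add_distrib]
    refine Finset.sum_le_sum fun a _ => ?_
    rw [Finset.mul_sum, Finset.mul_sum, ← Finset.sum_add_distrib]
    refine Finset.sum_le_sum fun b _ => ?_
    rw [hcoord a, hcoord b]
    have h1 : (1 - lam) * Function.update x i 0 a + lam * Function.update x i L a -
        ((1 - lam) * Function.update x i 0 b + lam * Function.update x i L b)
        = (1 - lam) * (Function.update x i 0 a - Function.update x i 0 b)
          + lam * (Function.update x i L a - Function.update x i L b) := by ring
    rw [h1]
    calc |(1 - lam) * (Function.update x i 0 a - Function.update x i 0 b)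
          + lam * (Function.update x i L a - Function.update x i L b)|
        ≤ |(1 - lam) * (Function.update x i 0 a - Function.update x i 0 b)|
          + |lam * (Function.update x i L a - Function.update x i L b)| := abs_add_le _ _
      _ = (1 - lam) * |Function.update x i 0 a - Function.update x i 0 b|
          + lam * |Function.update x i L a - Function.update x i L b| := by
          rw [abs_mul, abs_mul, abs_of_nonneg (by linarith), abs_of_nonneg hlam0]
  refine key.trans ?_
  rcases le_total (T (Function.update x i 0)) (T (Function.update x i L)) with h | h
  · rw [max_eq_right h]; nlinarith
  · rw [max_eq_left h]; nlinarith

lemma exists_extreme {L : ℝ} (hL : 0 < L) {q : ℕ} :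
    ∀ n (x : Fin q → ℝ), (∀ i, x i ∈ Set.Icc 0 L) →
      (Finset.univ.filter fun i => x i ≠ 0 ∧ x i ≠ L).card ≤ n →
      ∃ y : Fin q → ℝ, (∀ i, y i = 0 ∨ y i = L) ∧ T x ≤ T y := by
  intro n
  induction n with
  | zero =>
    intro x hx hc
    refine ⟨x, fun i => ?_, le_rfl⟩
    by_contra h
    push_neg at h
    have : i ∈ Finset.univ.filter fun i => x i ≠ 0 ∧ x i ≠ L := by
      simp [h.1, h.2]
    have := Finset.card_pos.2 ⟨i, this⟩
    omega
  | succ n ih =>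
    intro x hx hc
    by_cases hall : ∀ i, x i = 0 ∨ x i = L
    · exact ⟨x, hall, le_rfl⟩
    push_neg at hall
    obtain ⟨i, hi0, hiL⟩ := hall
    have himem : i ∈ Finset.univ.filter fun c => x c ≠ 0 ∧ x c ≠ L := by simp [hi0, hiL]
    have hsub : ∀ t : ℝ, (t = 0 ∨ t = L) →
        (Finset.univ.filter fun c => Function.update x i t c ≠ 0 ∧ Function.update x i t c ≠ L).card ≤ n := by
      intro t htex
      have hss : (Finset.univ.filter fun c => Function.update x i t c ≠ 0 ∧ Function.update x i t c ≠ L)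
          ⊆ (Finset.univ.filter fun c => x c ≠ 0 ∧ x c ≠ L).erase i := by
        intro c hcmem
        simp only [Finset.mem_filter, Finset.mem_univ, true_and] at hcmem
        by_cases hc : c = i
        · subst hc
          rw [Function.update_self] at hcmem
          rcases htex with rfl | rfl
          · exact absurd rfl hcmem.1
          · exact absurd rfl hcmem.2
        · rw [Function.update_of_ne hc] at hcmem
          simp [Finset.mem_erase, hc, hcmem.1, hcmem.2]
      have := Finset.card_le_card hss
      rw [Finset.card_erase_of_mem himem] at this
      omega
    have hmem : ∀ t : ℝ, (t = 0 ∨ t = L) → (∀ c, Function.update x i t c ∈ Set.Icc 0 L) := by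
      intro t htex c
      by_cases hc : c = i
      · subst hc; rw [Function.update_self]
        rcases htex with rfl | rfl
        · exact ⟨le_rfl, hL.le⟩
        · exact ⟨hL.le, le_rfl⟩
      · rw [Function.update_of_ne hc]; exact hx c
    have hxu : Function.update x i (x i) = x := Function.update_eq_self i x
    have hb := T_update_le x i hL (hx i)
    rw [hxu] at hb
    rcases le_total (T (Function.update x i 0)) (T (Function.update x i L)) with h | h
    · obtain ⟨y, hy, hle⟩ := ih (Function.update x i L) (hmem L (Or.inr rfl)) (hsub L (Or.inr rfl))
      exact ⟨y, hy, le_trans (hb.trans (max_le h le_rfl)) hle⟩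
    · obtain ⟨y, hy, hle⟩ := ih (Function.update x i 0) (hmem 0 (Or.inl rfl)) (hsub 0 (Or.inl rfl))
      exact ⟨y, hy, le_trans (hb.trans (max_le le_rfl h)) hle⟩

lemma T_extreme {L : ℝ} (hL : 0 < L) {q : ℕ} (y : Fin q → ℝ)
    (hy : ∀ i, y i = 0 ∨ y i = L) :
    T y = 2 * ((Finset.univ.filter fun i => y i = 0).card : ℝ)
      * ((q : ℝ) - (Finset.univ.filter fun i => y i = 0).card) * L := by
  set A := Finset.univ.filter fun i => y i = 0 with hA
  set k := A.card with hk
  have hkq0 : k + (Finset.univ.filter fun i => ¬ y i = 0).card = q := by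
    rw [hk, hA]
    have := Finset.card_filter_add_card_filter_not (s := (Finset.univ : Finset (Fin q)))
      (p := fun i => y i = 0)
    simpa using this
  have hkq : (Finset.univ.filter fun i => ¬ y i = 0).card = q - k := by omega
  have hkle : k ≤ q := by omega
  have hrow : ∀ i : Fin q, (∑ j : Fin q, |y i - y j|)
      = if y i = 0 then ((q : ℝ) - k) * L else (k : ℝ) * L := by
    intro i
    have hsumy : (∑ j : Fin q, y j) = ((q : ℝ) - k) * L := by
      rw [← Finset.sum_filter_add_sum_filter_not Finset.univ (fun j => y j = 0)]
      have h1 : (∑ j ∈ Finset.univ.filter fun j => y j = 0, y j) = 0 :=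
        Finset.sum_eq_zero fun j hj => by simpa using (Finset.mem_filter.1 hj).2
      have h2 : (∑ j ∈ Finset.univ.filter fun j => ¬ y j = 0, y j)
          = ((q - k : ℕ) : ℝ) * L := by
        rw [Finset.sum_congr rfl fun j hj => ?_, Finset.sum_const, hkq, nsmul_eq_mul]
        rcases hy j with h | h
        · exact absurd h (by simpa using (Finset.mem_filter.1 hj).2)
        · exact h
      rw [h1, h2, zero_add, Nat.cast_sub hkle]
    rcases hy i with h | h
    · rw [if_pos h]
      calc (∑ j : Fin q, |y i - y j|) = ∑ j : Fin q, y j := by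
            refine Finset.sum_congr rfl fun j _ => ?_
            rw [h]
            rcases hy j with h' | h' <;> rw [h'] <;> simp [abs_of_nonneg hL.le]
        _ = ((q : ℝ) - k) * L := hsumy
    · have hne : ¬ y i = 0 := by rw [h]; exact ne_of_gt hL
      rw [if_neg hne]
      calc (∑ j : Fin q, |y i - y j|) = ∑ j : Fin q, (L - y j) := by
            refine Finset.sum_congr rfl fun j _ => ?_
            rw [h]
            rcases hy j with h' | h' <;> rw [h'] <;> simp [abs_of_nonneg hL.le]
        _ = (q : ℝ) * L - (∑ j : Fin q, y j) := by
            rw [Finset.sum_sub_distrib, Finset.sum_const, Finset.card_univ, Fintype.card_fin,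
              nsmul_eq_mul]
        _ = (k : ℝ) * L := by rw [hsumy]; ring
  unfold T
  rw [Finset.sum_congr rfl fun i _ => hrow i]
  rw [← Finset.sum_filter_add_sum_filter_not Finset.univ (fun i => y i = 0)]
  rw [Finset.sum_congr rfl (fun i hi => if_pos (by simpa using (Finset.mem_filter.1 hi).2)),
    Finset.sum_congr rfl (fun i hi => if_neg (by simpa using (Finset.mem_filter.1 hi).2)),
    Finset.sum_const, Finset.sum_const, hkq, nsmul_eq_mul, nsmul_eq_mul, Nat.cast_sub hkle]
  ring

lemma S_le {L : ℝ} (hL : 0 < L) (m : ℕ) (x : Fin (2 * m + 1) → ℝ)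
    (hx : ∀ i, x i ∈ Set.Icc 0 L) : S x ≤ (m : ℝ) * (m + 1) * L := by
  obtain ⟨y, hy, hTle⟩ := exists_extreme hL
    ((Finset.univ.filter fun i => x i ≠ 0 ∧ x i ≠ L).card) x hx le_rfl
  set k := (Finset.univ.filter fun i => y i = 0).card with hk
  have hkle : k ≤ 2 * m + 1 := by
    have := Finset.card_le_card (Finset.filter_subset (fun i => y i = 0)
      (Finset.univ : Finset (Fin (2 * m + 1))))
    simpa using this
  have hTy := T_extreme hL y hy
  rw [T_eq, T_eq] at hTle
  have hSx : S x ≤ (k : ℝ) * (((2 * m + 1 : ℕ) : ℝ) - k) * L := by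
    have : 2 * S y = 2 * ((k : ℝ) * (((2 * m + 1 : ℕ) : ℝ) - k) * L) := by
      rw [← T_eq, hTy]; ring
    linarith
  refine hSx.trans ?_
  have hkey : (k : ℝ) * (((2 * m + 1 : ℕ) : ℝ) - k) ≤ (m : ℝ) * (m + 1) := by
    push_cast
    rcases le_or_gt k m with h | h
    · have h' : (k : ℝ) ≤ m := by exact_mod_cast h
      have h0 : (0 : ℝ) ≤ k := Nat.cast_nonneg k
      nlinarith
    · have h' : (m : ℝ) + 1 ≤ k := by exact_mod_cast h
      have h2 : (k : ℝ) ≤ 2 * m + 1 := by exact_mod_cast hkle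
      nlinarith
  nlinarith [hL.le, mul_le_mul_of_nonneg_right hkey hL.le]

lemma S_witness {L : ℝ} (hL : 0 < L) (m : ℕ) :
    S (fun i : Fin (2 * m + 1) => if (i : ℕ) < m then (0 : ℝ) else L)
      = (m : ℝ) * (m + 1) * L := by
  set y : Fin (2 * m + 1) → ℝ := fun i => if (i : ℕ) < m then (0 : ℝ) else L with hy
  have hext : ∀ i, y i = 0 ∨ y i = L := by
    intro i; by_cases h : (i : ℕ) < m
    · left; simp [hy, h]
    · right; simp [hy, h]
  have hcard : (Finset.univ.filter fun i => y i = 0).card = m := by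
    have heq : (Finset.univ.filter fun i => y i = 0)
        = (Finset.univ.filter fun i : Fin (2 * m + 1) => (i : ℕ) < m) := by
      refine Finset.filter_congr fun i _ => ?_
      by_cases h : (i : ℕ) < m
      · simp [hy, h]
      · simp [hy, h, ne_of_gt hL]
    rw [heq]
    have : (Finset.univ.filter fun i : Fin (2 * m + 1) => (i : ℕ) < m)
        = Finset.map (Fin.castLEEmb (by omega : m ≤ 2 * m + 1))
            (Finset.univ : Finset (Fin m)) := by
      ext i
      simp [Fin.ext_iff]
      constructor
      · intro h; exact ⟨⟨i, h⟩, rfl⟩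
      · rintro ⟨j, hj⟩; rw [← hj]; exact j.2
    rw [this]; simp
  have hTy := T_extreme hL y hext
  rw [hcard] at hTy
  rw [T_eq] at hTy
  have : (2 : ℝ) * S y = 2 * ((m : ℝ) * (m + 1) * L) := by
    rw [hTy]; push_cast; ring
  linarith

end ExtentAux


theorem extent_Icc_odd (L : ℝ) (hL : 0 < L) (m : ℕ) (hm : 1 ≤ m) :
    extent (Set.Icc (0 : ℝ) L) (2 * m + 1) = L * ((m : ℝ) * (m + 1)) / ((2 * m + 1).choose 2) ∧
    extent (Set.Icc (0 : ℝ) L) (2 * m + 1) = L * ((m : ℝ) + 1) / (2 * m + 1) := by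
  classical
  set q := 2 * m + 1 with hq
  have hC : q.choose 2 = m * (2 * m + 1) := by
    rw [hq, Nat.choose_two_right]
    have h1 : 2 * m + 1 - 1 = 2 * m := by omega
    have h2 : (2 * m + 1) * (2 * m) = m * (2 * m + 1) * 2 := by ring
    rw [h1, h2, Nat.mul_div_cancel _ (by norm_num : 0 < 2)]
  have hCpos : (0 : ℝ) < (q.choose 2 : ℝ) := by
    rw [hC]; push_cast; positivity
  set M : ℝ := L * ((m : ℝ) * (m + 1)) / (q.choose 2) with hM
  -- numerator of avgDist equals S of coerced tuple
  have hnum : ∀ x : Fin q → Set.Icc (0 : ℝ) L,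
      (∑ i : Fin q, ∑ j : Fin q, if i < j then dist (x i) (x j) else 0)
        = ExtentAux.S (fun i => (x i : ℝ)) := by
    intro x
    unfold ExtentAux.S
    refine Finset.sum_congr rfl fun i _ => Finset.sum_congr rfl fun j _ => ?_
    by_cases h : i < j
    · rw [if_pos h, if_pos h, Subtype.dist_eq, Real.dist_eq]
    · rw [if_neg h, if_neg h]
  -- upper bound
  have hbound : ∀ x : Fin q → Set.Icc (0 : ℝ) L, avgDist x ≤ M := by
    intro x
    rw [avgDist, hnum x, hM]
    have hS : ExtentAux.S (fun i => ((x i : ℝ))) ≤ L * ((m : ℝ) * (m + 1)) := by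
      have := ExtentAux.S_le hL m (fun i => ((x i : ℝ))) (fun i => (x i).2)
      linarith
    exact div_le_div_of_nonneg_right hS hCpos.le
  -- witness
  set w : Fin q → Set.Icc (0 : ℝ) L := fun i =>
    if (i : ℕ) < m then ⟨0, le_rfl, hL.le⟩ else ⟨L, hL.le, le_rfl⟩ with hw
  have hwcoe : (fun i => ((w i : ℝ)))
      = fun i : Fin (2 * m + 1) => if (i : ℕ) < m then (0 : ℝ) else L := by
    funext i
    by_cases h : (i : ℕ) < m <;> simp [hw, h]
  have hwval : avgDist w = M := by
    rw [avgDist, hnum w, hwcoe, ExtentAux.S_witness hL m, hM]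
    ring_nf
  haveI : Nonempty (Set.Icc (0 : ℝ) L) := ⟨⟨0, le_rfl, hL.le⟩⟩
  have hext : extent (Set.Icc (0 : ℝ) L) q = M := by
    apply le_antisymm
    · rw [extent]
      apply csSup_le (Set.range_nonempty _)
      rintro _ ⟨x, rfl⟩
      exact hbound x
    · rw [extent]
      exact le_csSup ⟨M, by rintro _ ⟨x, rfl⟩; exact hbound x⟩ ⟨w, hwval⟩
  refine ⟨hext, ?_⟩
  rw [hext, hM]
  have hCcast : ((q.choose 2 : ℕ) : ℝ) = (m : ℝ) * (2 * m + 1) := by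
    rw [hC]; push_cast; ring
  rw [hCcast]
  have hm0 : (m : ℝ) ≠ 0 := Nat.cast_ne_zero.2 (by omega)
  have h2m : (2 * (m : ℝ) + 1) ≠ 0 := by positivity
  field_simp
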